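/- Let N ⊂ ℝ² be a closed convex set containing the compact set M, and let Σ be a compact connected set with F_M(Σ) ≤ r. Then the image of Σ under the metric projection onto N is connected, satisfies F_M ≤ r, and has one-dimensional Hausdorff measure at most that of Σ. -/

import Mathlib

open MeasureTheory Metric

/-- Let `N ⊆ ℝ²` be a closed convex set containing the compact set `M`, let `Sig` be a
compact connected set with `F_M(Sig) ≤ r`, and let `proj` be the metric projection onto `N`
(the nearest-point map). Then the image of `Sig` under `proj` is connected, satisfies
`F_M ≤ r`, and has one-dimensional Hausdorff measure at most that of `Sig`. -/
theorem projection_image_connected_covers_and_shorter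
    (N M Sig : Set (EuclideanSpace ℝ (Fin 2))) (r : ℝ)
    (hN : IsClosed N) (hNconv : Convex ℝ N) (hMN : M ⊆ N) (hM : IsCompact M)
    (hSigC : IsCompact Sig) (hSigConn : IsConnected Sig)
    (hF : ∀ y ∈ M, infDist y Sig ≤ r)
    (proj : EuclideanSpace ℝ (Fin 2) → EuclideanSpace ℝ (Fin 2))
    (hprojMem : ∀ x, proj x ∈ N)
    (hprojNearest : ∀ x, dist x (proj x) = infDist x N) :
    IsConnected (proj '' Sig) ∧ (∀ y ∈ M, infDist y (proj '' Sig) ≤ r) ∧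
      μH[1] (proj '' Sig) ≤ μH[1] Sig := by
  -- variational inequality
  have hvar : ∀ x, ∀ w ∈ N, inner ℝ (x - proj x) (w - proj x) ≤ (0 : ℝ) := by
    intro x
    have h1 : ‖x - proj x‖ = ⨅ w : N, ‖x - w‖ := by
      have := hprojNearest x
      rw [infDist_eq_iInf] at this
      rw [← dist_eq_norm, this]
      simp only [dist_eq_norm]
    exact (norm_eq_iInf_iff_real_inner_le_zero hNconv (hprojMem x)).1 h1
  -- proj is 1-Lipschitz
  have hlip : LipschitzWith 1 proj := by
    intro x y
    simp only [ENNReal.coe_one, one_mul, edist_dist]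
    apply ENNReal.ofReal_le_ofReal
    have h1 := hvar x (proj y) (hprojMem y)
    have h2 := hvar y (proj x) (hprojMem x)
    have key : ‖proj x - proj y‖ ^ 2 ≤ inner ℝ (x - y) (proj x - proj y) := by
      simp only [← real_inner_self_eq_norm_sq, inner_sub_left, inner_sub_right] at h1 h2 ⊢
      linarith [real_inner_comm x (proj x), real_inner_comm x (proj y),
        real_inner_comm y (proj x), real_inner_comm y (proj y),
        real_inner_comm (proj x) (proj y), real_inner_comm x y]
    have h3 : inner ℝ (x - y) (proj x - proj y) ≤ ‖x - y‖ * ‖proj x - proj y‖ :=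
      real_inner_le_norm _ _
    rw [dist_eq_norm, dist_eq_norm]
    nlinarith [norm_nonneg (proj x - proj y), norm_nonneg (x - y)]
  have hcont : Continuous proj := hlip.continuous
  refine ⟨hSigConn.image proj hcont.continuousOn, ?_, ?_⟩
  · intro y hy
    have hyfix : proj y = y := by
      have : dist y (proj y) = 0 := by
        rw [hprojNearest y, infDist_zero_of_mem (hMN hy)]
      have := dist_eq_zero.1 this
      exact this.symm
    calc infDist y (proj '' Sig) ≤ infDist (proj y) (proj '' Sig) := by rw [hyfix]
      _ ≤ infDist y Sig := by
          have : Nonempty Sig := hSigConn.nonempty.to_subtype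
          rw [infDist_eq_iInf (x := y)]
          apply le_ciInf
          rintro ⟨z, hz⟩
          calc infDist (proj y) (proj '' Sig) ≤ dist (proj y) (proj z) :=
                infDist_le_dist_of_mem ⟨z, hz, rfl⟩
            _ ≤ dist y z := by simpa using hlip.dist_le_mul y z
      _ ≤ r := hF y hy
  · have := hlip.hausdorffMeasure_image_le (d := 1) zero_le_one Sig
    simpa using this
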